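/- Let (C, N, (A_i)_{i∈N}, k) be an approval election with n = |N|, k ≥ 1, and k dividing n. Let (W, π) be a Hare valid assignment whose Monroe score is maximal among all Hare valid assignments for this election. Then W provides Droop-JR. -/

import Mathlib

/-- An outcome `W` provides Droop-JR if for every `S ⊆ N` with `|S| > n/(k+1)`
and `⋂_{i∈S} A_i ≠ ∅`, it holds that `(⋃_{i∈S} A_i) ∩ W ≠ ∅`. -/
def DroopJR {V K : Type*}
    (N : Finset V) (A : V → Finset K) (k : ℕ) (W : Finset K) : Prop :=
  ∀ S ⊆ N, (S.card : ℚ) > (N.card : ℚ) / ((k : ℚ) + 1) →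
    (∃ c, ∀ i ∈ S, c ∈ A i) →
    ∃ c ∈ W, ∃ i ∈ S, c ∈ A i

/-- Suppose `k ∣ n` and `(W, π)` is a Hare valid assignment
(`W ⊆ C`, `|W| = k`, `π : N → W` with every preimage class of size exactly
`n/k`) whose Monroe score is maximal among all Hare valid assignments.
Then `W` provides Droop-JR. -/
theorem stmt_13 {V K : Type*} [DecidableEq V] [DecidableEq K]
    (N : Finset V) (C : Finset K) (A : V → Finset K) (k : ℕ)
    (hA : ∀ i ∈ N, A i ⊆ C) (hk : 1 ≤ k) (hdvd : k ∣ N.card)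
    (W : Finset K) (π : V → K)
    (hWC : W ⊆ C) (hWcard : W.card = k)
    (hπ : ∀ i ∈ N, π i ∈ W)
    (hquota : ∀ c ∈ W, (N.filter (fun i => π i = c)).card = N.card / k)
    (hmax : ∀ (W' : Finset K) (π' : V → K), W' ⊆ C → W'.card = k →
      (∀ i ∈ N, π' i ∈ W') →
      (∀ c ∈ W', (N.filter (fun i => π' i = c)).card = N.card / k) →
      (N.filter (fun i => π' i ∈ A i)).card ≤ (N.filter (fun i => π i ∈ A i)).card) :
    DroopJR N A k W := by
  intro S hSN hScard hScommon
  by_contra hcon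
  push_neg at hcon
  obtain ⟨cstar, hcstar⟩ := hScommon
  -- basic cardinalities
  have hSpos : 0 < S.card := by
    rcases Nat.eq_zero_or_pos S.card with h | h
    · exfalso
      have h0 : (0 : ℚ) ≤ (N.card : ℚ) / ((k : ℚ) + 1) := by positivity
      rw [h] at hScard
      push_cast at hScard
      linarith
    · exact h
  have hkS : N.card < (k + 1) * S.card := by
    have hk1 : (0 : ℚ) < (k : ℚ) + 1 := by positivity
    rw [gt_iff_lt, div_lt_iff₀ hk1] at hScard
    have : (N.card : ℚ) < ((k + 1) * S.card : ℕ) := by push_cast; linarith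
    exact_mod_cast this
  have hSNcard : S.card ≤ N.card := Finset.card_le_card hSN
  set q : ℕ := N.card / k with hqdef
  have hq : q * k = N.card := Nat.div_mul_cancel hdvd
  have hqpos : 0 < q := by
    rcases Nat.eq_zero_or_pos q with h | h
    · exfalso; rw [h, zero_mul] at hq; omega
    · exact h
  obtain ⟨i0, hi0⟩ := Finset.card_pos.mp hSpos
  have hcstarC : cstar ∈ C := hA i0 (hSN hi0) (hcstar i0 hi0)
  have hcstarW : cstar ∉ W := fun h => hcon cstar h i0 hi0 (hcstar i0 hi0)
  -- old satisfied set
  set T : Finset V := N.filter (fun i => π i ∈ A i) with hTdef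
  -- no voter of S is satisfied
  have hSunsat : ∀ i ∈ S, i ∉ T := by
    intro i hiS hiT
    rw [hTdef, Finset.mem_filter] at hiT
    exact hcon (π i) (hπ i (hSN hiS)) i hiS hiT.2
  have hSTdisj : Disjoint S T := Finset.disjoint_left.mpr hSunsat
  have hST : S.card + T.card ≤ N.card := by
    rw [← Finset.card_union_of_disjoint hSTdisj]
    exact Finset.card_le_card (Finset.union_subset hSN (Finset.filter_subset _ _))
  -- the least satisfied committee member
  have hWne : W.Nonempty := Finset.card_pos.mp (by omega)
  obtain ⟨c, hcW, hcmin⟩ := Finset.exists_min_image W (fun c => (T.filter (fun i => π i = c)).card) hWne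
  set sat : ℕ := (T.filter (fun i => π i = c)).card with hsatdef
  have hsum : T.card = ∑ c' ∈ W, (T.filter (fun i => π i = c')).card :=
    Finset.card_eq_sum_card_fiberwise (fun i hi => hπ i (Finset.mem_filter.mp hi).1)
  have hksat : k * sat ≤ T.card := by
    calc k * sat = ∑ _c' ∈ W, sat := by rw [Finset.sum_const, hWcard, smul_eq_mul, mul_comm]
    _ ≤ ∑ c' ∈ W, (T.filter (fun i => π i = c')).card := Finset.sum_le_sum (fun c' hc' => hcmin c' hc')
    _ = T.card := hsum.symm
  -- the key size s
  set s : ℕ := min S.card q with hsdef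
  have hsatlt : sat < s := by
    have hkey : T.card < k * s := by
      rcases le_total S.card q with h | h
      · have hs : k * s = k * S.card := by rw [hsdef, min_eq_left h]
        have h2 : (k + 1) * S.card = k * S.card + S.card := by ring
        omega
      · have hs : k * s = N.card := by rw [hsdef, min_eq_right h, ← hq, mul_comm]
        omega
    have := lt_of_le_of_lt hksat hkey
    exact lt_of_mul_lt_mul_left this (Nat.zero_le k)
  -- choose S' ⊆ S of size s
  obtain ⟨S', hS'S, hS'card⟩ := Finset.exists_subset_card_eq (min_le_left S.card q)
  -- the class of c
  set B : Finset V := N.filter (fun i => π i = c) with hBdef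
  have hBcard : B.card = q := hquota c hcW
  set M : Finset V := S' \ B with hMdef
  have hMLpool : M.card ≤ (B \ S').card := by
    rw [hMdef]
    have h1 := Finset.card_sdiff_add_card_inter S' B
    have h2 := Finset.card_sdiff_add_card_inter B S'
    have h3 : (S' ∩ B).card = (B ∩ S').card := by rw [Finset.inter_comm]
    omega
  obtain ⟨L, hLsub, hLcard⟩ := Finset.exists_subset_card_eq hMLpool
  have hLB : L ⊆ B := hLsub.trans (Finset.sdiff_subset)
  have hLM : ∀ i, i ∈ L → i ∉ M := by
    intro i hiL hiM
    exact (Finset.mem_sdiff.mp hiM).2 (hLB hiL)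
  have hML : ∀ i, i ∈ M → i ∉ L := fun i hiM hiL => hLM i hiL hiM
  have e : {x // x ∈ L} ≃ {x // x ∈ M} := Finset.equivOfCardEq hLcard
  -- the swap permutation
  set σ : V → V := fun i =>
    if h : i ∈ L then ((e ⟨i, h⟩ : {x // x ∈ M}) : V)
    else if h : i ∈ M then ((e.symm ⟨i, h⟩ : {x // x ∈ L}) : V)
    else i with hσdef
  have hσL : ∀ i (h : i ∈ L), σ i = ((e ⟨i, h⟩ : {x // x ∈ M}) : V) := by
    intro i h; simp only [hσdef, dif_pos h]
  have hσM : ∀ i (h : i ∈ M), σ i = ((e.symm ⟨i, h⟩ : {x // x ∈ L}) : V) := by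
    intro i h; simp only [hσdef, dif_neg (hML i h), dif_pos h]
  have hσid : ∀ i, i ∉ L → i ∉ M → σ i = i := by
    intro i h1 h2; simp only [hσdef, dif_neg h1, dif_neg h2]
  have hσinv : ∀ i, σ (σ i) = i := by
    intro i
    by_cases hL : i ∈ L
    · rw [hσL i hL]
      have hm : ((e ⟨i, hL⟩ : {x // x ∈ M}) : V) ∈ M := (e ⟨i, hL⟩).2
      rw [hσM _ hm]
      have : (⟨((e ⟨i, hL⟩ : {x // x ∈ M}) : V), hm⟩ : {x // x ∈ M}) = e ⟨i, hL⟩ :=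
        Subtype.ext rfl
      rw [this, Equiv.symm_apply_apply]
    · by_cases hM : i ∈ M
      · rw [hσM i hM]
        have hl : ((e.symm ⟨i, hM⟩ : {x // x ∈ L}) : V) ∈ L := (e.symm ⟨i, hM⟩).2
        rw [hσL _ hl]
        have : (⟨((e.symm ⟨i, hM⟩ : {x // x ∈ L}) : V), hl⟩ : {x // x ∈ L}) = e.symm ⟨i, hM⟩ :=
          Subtype.ext rfl
        rw [this, Equiv.apply_symm_apply]
      · rw [hσid i hL hM, hσid i hL hM]
  have hLN : L ⊆ N := hLB.trans (Finset.filter_subset _ _)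
  have hMN : M ⊆ N := (Finset.sdiff_subset).trans (hS'S.trans hSN)
  have hσN : ∀ i, i ∈ N → σ i ∈ N := by
    intro i hi
    by_cases hL : i ∈ L
    · rw [hσL i hL]; exact hMN (e ⟨i, hL⟩).2
    · by_cases hM : i ∈ M
      · rw [hσM i hM]; exact hLN (e.symm ⟨i, hM⟩).2
      · rw [hσid i hL hM]; exact hi
  -- counting lemma: precomposing with σ preserves filter cards over N
  have hcount : ∀ (P : V → Prop) [DecidablePred P],
      (N.filter (fun i => P (σ i))).card = (N.filter P).card := by
    intro P _
    apply Finset.card_nbij' σ σ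
    · intro a ha
      rw [Finset.mem_coe, Finset.mem_filter] at ha ⊢
      exact ⟨hσN a ha.1, ha.2⟩
    · intro a ha
      rw [Finset.mem_coe, Finset.mem_filter] at ha ⊢
      refine ⟨hσN a ha.1, ?_⟩
      rw [hσinv a]; exact ha.2
    · intro a _; exact hσinv a
    · intro a _; exact hσinv a
  -- the new committee and assignment
  set W' : Finset K := insert cstar (W.erase c) with hW'def
  set π' : V → K := fun i => if π (σ i) = c then cstar else π (σ i) with hπ'def
  have hW'C : W' ⊆ C := by
    rw [hW'def, Finset.insert_subset_iff]
    exact ⟨hcstarC, (Finset.erase_subset _ _).trans hWC⟩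
  have hW'card : W'.card = k := by
    rw [hW'def, Finset.card_insert_of_notMem (fun h => hcstarW (Finset.mem_of_mem_erase h)),
      Finset.card_erase_of_mem hcW, hWcard]
    omega
  have hπ'W : ∀ i ∈ N, π' i ∈ W' := by
    intro i hi
    simp only [hπ'def]
    by_cases h : π (σ i) = c
    · rw [if_pos h]; exact Finset.mem_insert_self _ _
    · rw [if_neg h]
      exact Finset.mem_insert_of_mem (Finset.mem_erase.mpr ⟨h, hπ _ (hσN i hi)⟩)
  have hquota' : ∀ c' ∈ W', (N.filter (fun i => π' i = c')).card = N.card / k := by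
    intro c' hc'
    rcases Finset.mem_insert.mp hc' with h | h
    · rw [h]
      have heq : N.filter (fun i => π' i = cstar) = N.filter (fun i => π (σ i) = c) := by
        apply Finset.filter_congr
        intro i hi
        simp only [hπ'def]
        constructor
        · intro hh
          by_contra hne
          rw [if_neg hne] at hh
          exact hcstarW (hh ▸ hπ _ (hσN i hi))
        · intro hh; simp only [if_pos hh]
      rw [heq, hcount (fun i => π i = c)]
      exact hquota c hcW
    · have hc'c : c' ≠ c := (Finset.mem_erase.mp h).1
      have hc'W : c' ∈ W := (Finset.mem_erase.mp h).2
      have hc'star : c' ≠ cstar := fun hh => hcstarW (hh ▸ hc'W)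
      have heq : N.filter (fun i => π' i = c') = N.filter (fun i => π (σ i) = c') := by
        apply Finset.filter_congr
        intro i _
        simp only [hπ'def]
        constructor
        · intro hh
          by_cases hce : π (σ i) = c
          · rw [if_pos hce] at hh; exact absurd hh.symm hc'star
          · rwa [if_neg hce] at hh
        · intro hh
          have : π (σ i) ≠ c := fun hce => hc'c (hh.symm.trans hce)
          rwa [if_neg this]
      rw [heq, hcount (fun i => π i = c')]
      exact hquota c' hc'W
  -- the new satisfied set contains S' and T \ B
  have hS'new : ∀ i ∈ S', i ∈ N.filter (fun j => π' j ∈ A j) := by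
    intro i hi
    have hiN : i ∈ N := hSN (hS'S hi)
    rw [Finset.mem_filter]
    refine ⟨hiN, ?_⟩
    have hπ'i : π' i = cstar := by
      simp only [hπ'def]
      by_cases hM : i ∈ M
      · have : σ i ∈ L := by rw [hσM i hM]; exact (e.symm ⟨i, hM⟩).2
        have : π (σ i) = c := (Finset.mem_filter.mp (hLB this)).2
        simp only [if_pos this]
      · have hiB : i ∈ B := by
          by_contra hB
          exact hM (Finset.mem_sdiff.mpr ⟨hi, hB⟩)
        have hiL : i ∉ L := fun hL => (Finset.mem_sdiff.mp (hLsub hL)).2 hi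
        rw [hσid i hiL hM]
        have : π i = c := (Finset.mem_filter.mp hiB).2
        simp only [if_pos this]
    rw [hπ'i]
    exact hcstar i (hS'S hi)
  have hTBnew : ∀ i ∈ T \ B, i ∈ N.filter (fun j => π' j ∈ A j) := by
    intro i hi
    obtain ⟨hiT, hiB⟩ := Finset.mem_sdiff.mp hi
    obtain ⟨hiN, hiA⟩ := Finset.mem_filter.mp hiT
    have hπic : π i ≠ c := fun h => hiB (Finset.mem_filter.mpr ⟨hiN, h⟩)
    have hiM : i ∉ M := by
      intro hM
      exact hSunsat i (hS'S (Finset.mem_sdiff.mp hM).1) hiT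
    have hiL : i ∉ L := fun h => hiB (hLB h)
    rw [Finset.mem_filter]
    refine ⟨hiN, ?_⟩
    simp only [hπ'def, hσid i hiL hiM]
    rw [if_neg hπic]
    exact hiA
  -- put it together
  have hdisjS'TB : Disjoint S' (T \ B) := by
    apply Finset.disjoint_left.mpr
    intro i hi hi2
    exact hSunsat i (hS'S hi) (Finset.mem_sdiff.mp hi2).1
  have hsubnew : S' ∪ (T \ B) ⊆ N.filter (fun j => π' j ∈ A j) := by
    apply Finset.union_subset
    · intro i hi; exact hS'new i hi
    · intro i hi; exact hTBnew i hi
  have hTB : (T \ B).card + sat ≥ T.card := by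
    have h1 := Finset.card_sdiff_add_card_inter T B
    have h2 : T ∩ B = T.filter (fun i => π i = c) := by
      ext i
      simp only [Finset.mem_inter, Finset.mem_filter, hBdef, hTdef]
      tauto
    rw [hsatdef, ← h2]
    omega
  have hnewge : s + (T \ B).card ≤ (N.filter (fun j => π' j ∈ A j)).card := by
    calc s + (T \ B).card = (S' ∪ (T \ B)).card := by
          rw [Finset.card_union_of_disjoint hdisjS'TB, hS'card, hsdef]
    _ ≤ _ := Finset.card_le_card hsubnew
  have hle := hmax W' π' hW'C hW'card hπ'W hquota'
  omega
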